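/- Let e, k, j be positive integers with j + k ≤ e - 1, k ≤ e/2, and j ≥ k+1. Then the Frobenius number of S_k^e(j) = ⟨e,...,e+j-1, e+j+k,...,2e-1⟩ is e + j + k - 1 and its genus is e + k - 1. -/

import Mathlib

/-- The set of gaps of a numerical semigroup (submonoid of ℕ). -/
def gapsOf (S : AddSubmonoid ℕ) : Set ℕ := {n | n ∉ S}

/-- The Frobenius number: the largest gap. -/
noncomputable def frobeniusNumber (S : AddSubmonoid ℕ) : ℕ := sSup (gapsOf S)

/-- The genus: the number of gaps. -/
noncomputable def genusOf (S : AddSubmonoid ℕ) : ℕ := Nat.card (gapsOf S)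

/-- A numerical semigroup is symmetric iff 2g = F + 1. -/
def IsSymmetricNS (S : AddSubmonoid ℕ) : Prop :=
  2 * genusOf S = frobeniusNumber S + 1

/-- The Sally type semigroup `S_k^e(j) = ⟨e,…,e+j-1, e+j+k,…,2e-1⟩`. -/
def sally (e k j : ℕ) : AddSubmonoid ℕ :=
  AddSubmonoid.closure (Set.Ico e (e + j) ∪ Set.Ico (e + j + k) (2 * e))

lemma sally_gen_mem {e k j n : ℕ}
    (h : n ∈ Set.Ico e (e + j) ∪ Set.Ico (e + j + k) (2 * e)) :
    n ∈ sally e k j := AddSubmonoid.subset_closure h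

lemma mem_sally_of_ge (e k j : ℕ) (he : 0 < e) (hj : 0 < j) (hjk' : k + 1 ≤ j) :
    ∀ n, e + j + k ≤ n → n ∈ sally e k j := by
  intro n
  induction n using Nat.strong_induction_on with
  | _ n ih =>
    intro hn
    by_cases h2 : n < 2 * e
    · exact sally_gen_mem (Or.inr ⟨hn, h2⟩)
    · push_neg at h2
      by_cases h3 : e + j + k ≤ n - e
      · have hrw : n = (n - e) + e := by omega
        rw [hrw]
        exact (sally e k j).add_mem (ih (n - e) (by omega) h3)
          (sally_gen_mem (Or.inl ⟨le_refl e, by omega⟩))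
      · by_cases h4 : n - e < e + j
        · have hrw : n = (n - e) + e := by omega
          rw [hrw]
          exact (sally e k j).add_mem (sally_gen_mem (Or.inl ⟨by omega, h4⟩))
            (sally_gen_mem (Or.inl ⟨le_refl e, by omega⟩))
        · have hrw : n = (e + j - 1) + (n - (e + j - 1)) := by omega
          rw [hrw]
          exact (sally e k j).add_mem
            (sally_gen_mem (Or.inl ⟨by omega, by omega⟩))
            (sally_gen_mem (Or.inl ⟨by omega, by omega⟩))

lemma mem_sally_iff (e k j n : ℕ) (he : 0 < e) (hj : 0 < j) (hjk : j + k ≤ e - 1)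
    (hjk' : k + 1 ≤ j) :
    n ∈ sally e k j ↔ n = 0 ∨ (e ≤ n ∧ n < e + j) ∨ e + j + k ≤ n := by
  constructor
  · intro hn
    induction hn using AddSubmonoid.closure_induction with
    | mem x hx => rcases hx with ⟨h1, h2⟩ | ⟨h1, h2⟩ <;> omega
    | zero => omega
    | add a b ha hb iha ihb => omega
  · rintro (rfl | ⟨h1, h2⟩ | h)
    · exact (sally e k j).zero_mem
    · exact sally_gen_mem (Or.inl ⟨h1, h2⟩)
    · exact mem_sally_of_ge e k j he hj hjk' n h

theorem sally_frobenius_genus_of_j_ge_k_add_one (e k j : ℕ) (he : 0 < e) (hk : 0 < k)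
    (hj : 0 < j) (hjk : j + k ≤ e - 1) (hke : 2 * k ≤ e) (hjk' : k + 1 ≤ j) :
    frobeniusNumber (sally e k j) = e + j + k - 1 ∧
    genusOf (sally e k j) = e + k - 1 := by
  have hmem := fun n => mem_sally_iff e k j n he hj hjk hjk'
  have hgaps : gapsOf (sally e k j)
      = ↑(Finset.Ico 1 e ∪ Finset.Ico (e + j) (e + j + k)) := by
    ext n
    simp only [gapsOf, Set.mem_setOf_eq, hmem n, Finset.coe_union, Set.mem_union,
      Finset.coe_Ico, Set.mem_Ico]
    omega
  constructor
  · have : IsGreatest (gapsOf (sally e k j)) (e + j + k - 1) := by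
      constructor
      · rw [hgaps]
        simp only [Finset.coe_union, Set.mem_union, Finset.coe_Ico, Set.mem_Ico]
        omega
      · intro n hn
        rw [hgaps] at hn
        simp only [Finset.coe_union, Set.mem_union, Finset.coe_Ico, Set.mem_Ico] at hn
        omega
    exact this.csSup_eq
  · rw [genusOf, hgaps, Nat.card_coe_set_eq, Set.ncard_coe_finset,
      Finset.card_union_of_disjoint (by
        simp only [Finset.disjoint_left, Finset.mem_Ico]
        omega)]
    simp only [Nat.card_Ico]
    omega
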